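/- Eigenvalues of a peripheral monodromy product: let m ≥ 1 and let t_k, x_k, y_k > 0 for k = 1,…,m, and let T(z) = z^{-1/3}·[[0,0,1],[0,-1,-1],[z,z+1,1]] and E(x,y) = (x/y)^{1/3}·[[0,0,y],[0,-1,0],[1/x,0,0]]. Then the product P = ∏_{k=1}^m T(t_k)⁻¹·E(x_k, y_k) is an upper triangular 3×3 matrix whose diagonal entries (hence eigenvalues) are λ₁ = ∏_{k=1}^m (y_k·t_k²·x_k²)^{−1/3}, λ₂ = ∏_{k=1}^m (t_k·x_k/y_k)^{1/3}, and λ₃ = ∏_{k=1}^m (y_k²·t_k·x_k)^{1/3}. -/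

import Mathlib

open scoped BigOperators

/-- The elementary triangle monodromy matrix `T(z)`. -/
noncomputable def Tmat (z : ℝ) : Matrix (Fin 3) (Fin 3) ℝ :=
  (z ^ (-(1 / 3 : ℝ))) • !![0, 0, 1; 0, -1, -1; z, z + 1, 1]

/-- The elementary edge monodromy matrix `E(x,y)`. -/
noncomputable def Emat (x y : ℝ) : Matrix (Fin 3) (Fin 3) ℝ :=
  ((x / y) ^ ((1 : ℝ) / 3)) • !![0, 0, y; 0, -1, 0; 1 / x, 0, 0]

/-- The ordered product `∏_{k=1}^m T(t_k)⁻¹ E(x_k, y_k)` representing a peripheral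
holonomy in the Fock–Goncharov parametrization. -/
noncomputable def periph {m : ℕ} (t x y : Fin m → ℝ) : Matrix (Fin 3) (Fin 3) ℝ :=
  (List.ofFn fun k : Fin m => (Tmat (t k))⁻¹ * Emat (x k) (y k)).prod

private lemma cube13 {a : ℝ} (ha : 0 < a) : (a ^ ((1 : ℝ) / 3)) ^ 3 = a := by
  rw [← Real.rpow_natCast (a ^ ((1 : ℝ) / 3)) 3, ← Real.rpow_mul ha.le]
  norm_num

private lemma cube_inj : Function.Injective (fun a : ℝ => a ^ 3) :=
  (Odd.strictMono_pow (R := ℝ) ⟨1, by norm_num⟩).injective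

/-- The inverse of `Tmat`. -/
private lemma Tmat_inv {z : ℝ} (hz : 0 < z) :
    (Tmat z)⁻¹ = (z ^ ((1 : ℝ) / 3)) • !![1, (z + 1) / z, 1 / z; -1, -1, 0; 1, 0, 0] := by
  apply Matrix.inv_eq_right_inv
  rw [Tmat, Matrix.smul_mul, Matrix.mul_smul, smul_smul, ← Real.rpow_add hz]
  have h0 : (-(1 / 3 : ℝ)) + 1 / 3 = 0 := by norm_num
  rw [h0, Real.rpow_zero, one_smul]
  ext i j
  fin_cases i <;> fin_cases j <;>
    simp [Matrix.mul_apply, Fin.sum_univ_three, Matrix.one_apply, Matrix.vecHead,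
      Matrix.vecTail] <;>
    field_simp <;> ring

private lemma factor {z x y : ℝ} (hz : 0 < z) (hx : 0 < x) (hy : 0 < y) :
    (Tmat z)⁻¹ * Emat x y =
      (z ^ ((1 : ℝ) / 3) * (x / y) ^ ((1 : ℝ) / 3)) •
        !![1 / (z * x), -(z + 1) / z, y; 0, 1, -y; 0, 0, y] := by
  rw [Tmat_inv hz, Emat, Matrix.smul_mul, Matrix.mul_smul, smul_smul]
  congr 1
  ext i j
  fin_cases i <;> fin_cases j <;>
    simp [Matrix.mul_apply, Fin.sum_univ_three, Matrix.vecHead, Matrix.vecTail] <;>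
    field_simp <;> ring

private lemma diag1 {z x y : ℝ} (hz : 0 < z) (hx : 0 < x) (hy : 0 < y) :
    z ^ ((1 : ℝ) / 3) * (x / y) ^ ((1 : ℝ) / 3) * (1 / (z * x)) =
      (y * z ^ 2 * x ^ 2) ^ (-(1 / 3 : ℝ)) := by
  have h1 : (0 : ℝ) < x / y := div_pos hx hy
  have h2 : (0 : ℝ) < y * z ^ 2 * x ^ 2 := by positivity
  apply cube_inj
  show _ ^ 3 = _ ^ 3
  have e1 : (z ^ ((1 : ℝ) / 3) * (x / y) ^ ((1 : ℝ) / 3) * (1 / (z * x))) ^ 3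
      = z * (x / y) * (1 / (z * x)) ^ 3 := by
    rw [mul_pow, mul_pow, cube13 hz, cube13 h1]
  have e2 : ((y * z ^ 2 * x ^ 2) ^ (-(1 / 3 : ℝ))) ^ 3 = (y * z ^ 2 * x ^ 2)⁻¹ := by
    rw [show (-(1 / 3 : ℝ)) = -((1:ℝ)/3) by norm_num, Real.rpow_neg h2.le, inv_pow, cube13 h2]
  rw [e1, e2]
  field_simp

private lemma diag2 {z x y : ℝ} (hz : 0 < z) (hx : 0 < x) (hy : 0 < y) :
    z ^ ((1 : ℝ) / 3) * (x / y) ^ ((1 : ℝ) / 3) * 1 = (z * x / y) ^ ((1 : ℝ) / 3) := by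
  have h1 : (0 : ℝ) < x / y := div_pos hx hy
  have h2 : (0 : ℝ) < z * x / y := by positivity
  apply cube_inj
  show _ ^ 3 = _ ^ 3
  rw [mul_pow, mul_pow, cube13 hz, cube13 h1, cube13 h2, one_pow]
  field_simp

private lemma diag3 {z x y : ℝ} (hz : 0 < z) (hx : 0 < x) (hy : 0 < y) :
    z ^ ((1 : ℝ) / 3) * (x / y) ^ ((1 : ℝ) / 3) * y = (y ^ 2 * z * x) ^ ((1 : ℝ) / 3) := by
  have h1 : (0 : ℝ) < x / y := div_pos hx hy
  have h2 : (0 : ℝ) < y ^ 2 * z * x := by positivity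
  apply cube_inj
  show _ ^ 3 = _ ^ 3
  rw [mul_pow, mul_pow, cube13 hz, cube13 h1, cube13 h2]
  field_simp

/-- Each factor is upper triangular with the claimed diagonal. -/
private lemma factor_tri {z x y : ℝ} (hz : 0 < z) (hx : 0 < x) (hy : 0 < y) :
    ((Tmat z)⁻¹ * Emat x y).BlockTriangular (id : Fin 3 → Fin 3) ∧
    ((Tmat z)⁻¹ * Emat x y) 0 0 = (y * z ^ 2 * x ^ 2) ^ (-(1 / 3 : ℝ)) ∧
    ((Tmat z)⁻¹ * Emat x y) 1 1 = (z * x / y) ^ ((1 : ℝ) / 3) ∧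
    ((Tmat z)⁻¹ * Emat x y) 2 2 = (y ^ 2 * z * x) ^ ((1 : ℝ) / 3) := by
  rw [factor hz hx hy]
  refine ⟨?_, ?_, ?_, ?_⟩
  · intro i j hij
    fin_cases i <;> fin_cases j <;>
      simp_all [Matrix.smul_apply, Matrix.vecHead, Matrix.vecTail]
  · simpa using diag1 hz hx hy
  · simpa using diag2 hz hx hy
  · simpa using diag3 hz hx hy

private lemma list_prod_tri (l : List (Matrix (Fin 3) (Fin 3) ℝ))
    (h : ∀ A ∈ l, A.BlockTriangular (id : Fin 3 → Fin 3)) :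
    l.prod.BlockTriangular (id : Fin 3 → Fin 3) ∧
    ∀ i, l.prod i i = (l.map (fun A => A i i)).prod := by
  induction l with
  | nil =>
    refine ⟨Matrix.blockTriangular_one, fun i => by simp [Matrix.one_apply]⟩
  | cons A l ih =>
    have hA := h A List.mem_cons_self
    obtain ⟨htri, hdiag⟩ := ih (fun B hB => h B (List.mem_cons_of_mem A hB))
    refine ⟨by simpa using hA.mul htri, fun i => ?_⟩
    have : (A * l.prod) i i = A i i * l.prod i i := by
      rw [Matrix.mul_apply]
      refine Finset.sum_eq_single i (fun j _ hj => ?_) (by simp)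
      rcases lt_or_gt_of_ne hj with hlt | hlt
      · rw [hA hlt, zero_mul]
      · rw [htri hlt, mul_zero]
    simp [this, hdiag i]

theorem periph_upper_triangular_eigenvalues
    (m : ℕ) (hm : 1 ≤ m) (t x y : Fin m → ℝ)
    (ht : ∀ k, 0 < t k) (hx : ∀ k, 0 < x k) (hy : ∀ k, 0 < y k) :
    (periph t x y).BlockTriangular (id : Fin 3 → Fin 3) ∧
    periph t x y 0 0 = ∏ k, (y k * t k ^ 2 * x k ^ 2) ^ (-(1 / 3 : ℝ)) ∧
    periph t x y 1 1 = ∏ k, (t k * x k / y k) ^ ((1 : ℝ) / 3) ∧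
    periph t x y 2 2 = ∏ k, (y k ^ 2 * t k * x k) ^ ((1 : ℝ) / 3) := by
  have hmem : ∀ A ∈ (List.ofFn fun k : Fin m => (Tmat (t k))⁻¹ * Emat (x k) (y k)),
      A.BlockTriangular (id : Fin 3 → Fin 3) := by
    intro A hA
    rw [List.mem_ofFn] at hA
    obtain ⟨k, rfl⟩ := hA
    exact (factor_tri (ht k) (hx k) (hy k)).1
  obtain ⟨htri, hdiag⟩ := list_prod_tri _ hmem
  refine ⟨htri, ?_, ?_, ?_⟩
  · rw [show periph t x y 0 0 = _ from hdiag 0, List.map_ofFn, List.prod_ofFn]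
    exact Finset.prod_congr rfl fun k _ => (factor_tri (ht k) (hx k) (hy k)).2.1
  · rw [show periph t x y 1 1 = _ from hdiag 1, List.map_ofFn, List.prod_ofFn]
    exact Finset.prod_congr rfl fun k _ => (factor_tri (ht k) (hx k) (hy k)).2.2.1
  · rw [show periph t x y 2 2 = _ from hdiag 2, List.map_ofFn, List.prod_ofFn]
    exact Finset.prod_congr rfl fun k _ => (factor_tri (ht k) (hx k) (hy k)).2.2.2
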